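/- Let p_t(u) = ((t+1)/2^t) * (1-u)/(1-u^(t+1)) * (1+u)^t with x = u/(1+u)^2. Then p_t(u(x)), as a power series in x, satisfies p_t(1) = 1 when evaluated at u = 1 (i.e., it is a probability generating function), and its coefficient of x^m equals ((t+1)/2^t) * sum over λ ≥ 0 of [binom(2m-1+t, m-λ(t+1)) - 2*binom(2m-1+t, m-1-λ(t+1)) + binom(2m-1+t, m-2-λ(t+1))]. -/

import Mathlib

open PowerSeries Finset Filter

lemma chooseId (K m : ℕ) :
    (((K+1).choose (m+1) : ℝ)) - ((K+1).choose m : ℝ) =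
      ((K.choose (m+1) : ℝ) - (K.choose m : ℝ))
        + ((K.choose m : ℝ) - if 1 ≤ m then (K.choose (m-1) : ℝ) else 0) := by
  rcases m with _ | p
  · simp [Nat.choose_one_right]
  · rw [Nat.choose_succ_succ (K) (p+1), Nat.choose_succ_succ (K) p]
    simp only [Nat.le_add_left, if_true, Nat.succ_sub_one]
    push_cast
    ring

lemma key_coeff (u : PowerSeries ℝ)
    (hu0 : constantCoeff u = 0) (hu : u = X * (1 + u) ^ 2) :
    ∀ m n j : ℕ, coeff m ((1 + u) ^ n * u ^ j) =
      (if j ≤ m then ((2 * m + n - 1).choose (m - j) : ℝ) else 0)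
      - (if j + 1 ≤ m then ((2 * m + n - 1).choose (m - j - 1) : ℝ) else 0) := by
  intro m
  induction m using Nat.strong_induction_on with
  | _ m ih =>
    intro n j
    rcases m with _ | m
    · rw [coeff_zero_eq_constantCoeff]
      rcases j with _ | j
      · simp [hu0]
      · simp [hu0, map_pow, map_mul]
    · rcases j with _ | j
      · induction n with
        | zero =>
          simp only [pow_zero, mul_one, coeff_one, Nat.succ_ne_zero, if_false,
            Nat.sub_zero, Nat.le_add_left, if_true, Nat.le_refl, Nat.succ_sub_one]
          have hsymm : (2*(m+1)+0-1).choose (m+1) = (2*(m+1)+0-1).choose m := by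
            rw [show 2*(m+1)+0-1 = 2*m+1 by omega]
            have := Nat.choose_symm (show m ≤ 2*m+1 by omega)
            rwa [show 2*m+1-m = m+1 by omega] at this
          rw [hsymm, sub_self]
        | succ n ihn =>
          have h2 : (1+u)^(n+1) = (1+u)^n + X*(1+u)^(n+2) := by
            have e1 : X*(1+u)^(n+2) = (X*(1+u)^2) * (1+u)^n := by ring
            rw [e1, ← hu]; ring
          rw [pow_zero, mul_one] at ihn ⊢
          rw [h2, map_add, ihn, coeff_succ_X_mul]
          have h3 := ih m (Nat.lt_succ_self m) (n+2) 0
          rw [pow_zero, mul_one] at h3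
          rw [h3]
          rw [show 2 * (m+1) + (n+1) - 1 = (2*m+n+1)+1 by omega,
              show 2 * (m+1) + n - 1 = 2*m+n+1 by omega,
              show 2 * m + (n+2) - 1 = 2*m+n+1 by omega]
          simp only [Nat.sub_zero, Nat.le_add_left, if_true, Nat.le_refl,
            Nat.succ_sub_one, Nat.zero_add]
          simp only [Nat.zero_le, if_true]
          exact (chooseId (2*m+n+1) m).symm
      · have e : (1+u)^n * u^(j+1) = X * ((1+u)^(n+2) * u^j) := by
          have e1 : X * ((1+u)^(n+2) * u^j) = ((1+u)^n * u^j) * (X*(1+u)^2) := by ring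
          rw [e1, ← hu]; ring
        rw [e, coeff_succ_X_mul, ih m (Nat.lt_succ_self m) (n+2) j]
        rw [show 2*m + (n+2) - 1 = 2*(m+1)+n-1 by omega,
            show m - j = m + 1 - (j+1) by omega]
        simp only [Nat.add_le_add_iff_right]

theorem stmt_17 (t : ℕ) (u : PowerSeries ℝ)
    (hu0 : constantCoeff u = 0) (hu : u = X * (1 + u) ^ 2) :
    Tendsto (fun v : ℝ =>
        (((t : ℝ) + 1) / 2 ^ t) * (1 - v) / (1 - v ^ (t + 1)) * (1 + v) ^ t)
      (nhdsWithin 1 {(1 : ℝ)}ᶜ) (nhds 1) ∧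
    ∀ m : ℕ,
      coeff m (PowerSeries.C (((t : ℝ) + 1) / 2 ^ t) * (1 - u) *
          (1 - u ^ (t + 1))⁻¹ * (1 + u) ^ t) =
        (((t : ℝ) + 1) / 2 ^ t) *
          ∑ l ∈ Finset.range (m + 1),
            ((if l * (t + 1) ≤ m then ((2 * m + t - 1).choose (m - l * (t + 1)) : ℝ) else 0)
              - 2 * (if l * (t + 1) + 1 ≤ m then
                  ((2 * m + t - 1).choose (m - 1 - l * (t + 1)) : ℝ) else 0)
              + (if l * (t + 1) + 2 ≤ m then
                  ((2 * m + t - 1).choose (m - 2 - l * (t + 1)) : ℝ) else 0)) := by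
  constructor
  · -- limit part
    set Cc : ℝ := ((t : ℝ) + 1) / 2 ^ t with hCc
    have ht1 : ((t : ℝ) + 1) ≠ 0 := by positivity
    have h2t : (2 : ℝ) ^ t ≠ 0 := by positivity
    have hcont : ContinuousAt
        (fun v : ℝ => Cc * (∑ i ∈ Finset.range (t+1), v ^ i)⁻¹ * (1 + v) ^ t) 1 := by
      apply ContinuousAt.mul
      · apply ContinuousAt.mul continuousAt_const
        apply ContinuousAt.inv₀
        · exact (continuous_finset_sum _ fun i _ => continuous_pow i).continuousAt
        · simp
          positivity
      · exact ((continuous_const.add continuous_id).pow t).continuousAt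
    have hval : Cc * (∑ i ∈ Finset.range (t+1), (1:ℝ) ^ i)⁻¹ * (1 + 1) ^ t = 1 := by
      simp only [one_pow, Finset.sum_const, Finset.card_range, smul_eq_mul, mul_one]
      rw [hCc]
      field_simp
      ring
    have htends : Tendsto
        (fun v : ℝ => Cc * (∑ i ∈ Finset.range (t+1), v ^ i)⁻¹ * (1 + v) ^ t)
        (nhdsWithin 1 {(1:ℝ)}ᶜ) (nhds 1) := by
      have := hcont.tendsto
      rw [hval] at this
      exact this.mono_left nhdsWithin_le_nhds
    apply Tendsto.congr' _ htends
    filter_upwards [self_mem_nhdsWithin] with v hv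
    have hv1 : (1:ℝ) - v ≠ 0 := sub_ne_zero.mpr (Ne.symm hv)
    have hS : (1:ℝ) - v ^ (t+1) = (1 - v) * ∑ i ∈ Finset.range (t+1), v ^ i := by
      linear_combination geom_sum_mul v (t+1)
    rw [hS, show Cc * (1 - v) = (1 - v) * Cc by ring,
        mul_div_mul_left Cc _ hv1, div_eq_mul_inv]
  · -- coefficient part
    intro m
    set Cc : ℝ := ((t : ℝ) + 1) / 2 ^ t with hCc
    have hne : constantCoeff (1 - u ^ (t+1)) ≠ 0 := by
      simp [map_pow, hu0, zero_pow]
    have hmul : (1 - u ^ (t+1)) * (1 - u ^ (t+1))⁻¹ = 1 :=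
      PowerSeries.mul_inv_cancel _ hne
    set S : ℝ⟦X⟧ := ∑ l ∈ Finset.range (m+1), (u ^ (t+1)) ^ l with hSdef
    have hgeo : (1 - u ^ (t+1)) * S = 1 - (u ^ (t+1)) ^ (m+1) := by
      linear_combination -(geom_sum_mul (u ^ (t+1)) (m+1))
    have h0 : (1 - u ^ (t+1)) ≠ 0 := by
      intro h; apply hne; rw [h]; simp
    have hinv : (1 - u ^ (t+1))⁻¹ = S + (1 - u ^ (t+1))⁻¹ * (u ^ (t+1)) ^ (m+1) := by
      apply mul_left_cancel₀ h0
      rw [hmul, mul_add, hgeo, ← mul_assoc, hmul]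
      ring
    rw [hinv]
    have expand : PowerSeries.C Cc * (1 - u) *
        (S + (1 - u ^ (t+1))⁻¹ * (u ^ (t+1)) ^ (m+1)) * (1 + u) ^ t
      = PowerSeries.C Cc * ((1 - u) * S * (1 + u) ^ t)
        + (PowerSeries.C Cc * (1 - u) * (1 - u ^ (t+1))⁻¹ * (1 + u) ^ t)
            * (u ^ (t+1)) ^ (m+1) := by ring
    rw [expand, map_add]
    have hz : coeff m ((PowerSeries.C Cc * (1 - u) * (1 - u ^ (t+1))⁻¹ * (1 + u) ^ t)
        * (u ^ (t+1)) ^ (m+1)) = 0 := by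
      have hXu : (X : ℝ⟦X⟧) ∣ u := X_dvd_iff.2 hu0
      have hd1 : (X : ℝ⟦X⟧) ^ (m+1) ∣ u ^ (m+1) := pow_dvd_pow_of_dvd hXu (m+1)
      have hd2 : (u : ℝ⟦X⟧) ^ (m+1) ∣ (u ^ (t+1)) ^ (m+1) := by
        rw [← pow_mul]
        exact pow_dvd_pow u (by nlinarith)
      have hd : (X : ℝ⟦X⟧) ^ (m+1) ∣
          (PowerSeries.C Cc * (1 - u) * (1 - u ^ (t+1))⁻¹ * (1 + u) ^ t)
            * (u ^ (t+1)) ^ (m+1) :=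
        Dvd.dvd.mul_left (hd1.trans hd2) _
      exact (X_pow_dvd_iff.1 hd) m (Nat.lt_succ_self m)
    rw [hz, add_zero]
    have hsum : (1 - u) * S * (1 + u) ^ t
        = ∑ l ∈ Finset.range (m+1), ((1 + u) ^ t * u ^ (l*(t+1)) - (1 + u) ^ t * u ^ (l*(t+1)+1)) := by
      rw [hSdef, Finset.mul_sum, Finset.sum_mul]
      apply Finset.sum_congr rfl
      intro l _
      rw [← pow_mul, mul_comm (t+1) l]
      ring
    rw [hsum, coeff_C_mul]
    congr 1
    rw [map_sum]
    apply Finset.sum_congr rfl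
    intro l _
    generalize l * (t+1) = j
    rw [map_sub, key_coeff u hu0 hu m t j, key_coeff u hu0 hu m t (j+1),
        show m - (j+1) = m - 1 - j by omega,
        show m - j - 1 = m - 1 - j by omega,
        show m - 1 - j - 1 = m - 2 - j by omega,
        show j + 1 + 1 = j + 2 by omega]
    ring
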